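/- Every element b of the canonical signed basis 𝓑 of the two-parameter algebra f lies in 𝐟 ⊗ 1 ⊂ f = 𝐟 ⊗_{ℚ(v)} ℚ(v,t): if x ∈ f satisfies x ∈ _𝔄f, x̄ = x, and (x,x) ∈ 1 + v^{-1}ℤ[[v^{-1}]], and x is written as x = ∑_{b} b·t^{n_b} with b ranging over a ℚ(v)-basis of 𝐟⊗1 on which the form is the one-parameter form, then all n_b with b contributing nontrivially must equal 0. -/

import Mathlib

/-!
STATEMENT 19: Every element of the canonical signed basis 𝓑 of the
two-parameter algebra f lies in 𝐟 ⊗ 1 ⊂ f = 𝐟 ⊗_{ℚ(v)} ℚ(v,t): if x ∈ f is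
integral, bar-invariant, satisfies (x,x) ∈ 1 + v⁻¹ℤ[[v⁻¹]], and is written as
x = ∑_b b·t^{n_b} with b ranging over a ℚ(v)-basis of 𝐟⊗1 on which the form
is the one-parameter (almost orthonormal) form, then all contributing n_b are
zero.

We model ℚ(v,t) as ℚ(v)(t), with the basis indexed by a type β (support a
finite set s), exponents n : β → ℤ, and one-parameter form values
P b b' ∈ δ_{bb'} + v⁻¹ℤ[[v⁻¹]] in ℚ(v); then
(x,x) = ∑_{b,b'∈s} t^{n_b+n_{b'}} P(b,b'), and the hypothesis
(x,x) ∈ 1 + v⁻¹ℤ[[v⁻¹]] (in particular (x,x) is t-free) forces n_b = 0 for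
all b ∈ s.  Membership in ℤ[[v⁻¹]] is expressed through the Laurent expansion
at 0 of the rational function after the substitution v ↦ v⁻¹.
-/

noncomputable section

/-- ℚ(v). -/
abbrev Qv := RatFunc ℚ

/-- ℚ(v,t) = ℚ(v)(t). -/
abbrev Qvt := RatFunc Qv

/-- The indeterminate v. -/
def vQ : Qv := RatFunc.X

/-- The indeterminate t. -/
def tQ : Qvt := RatFunc.X

/-- The substitution v ↦ v⁻¹, as a ring endomorphism of ℚ(v). -/
def subinv : Qv →+* Qv :=
  IsFractionRing.lift
    (g := ((Polynomial.aeval (vQ⁻¹ : Qv)).toRingHom : Polynomial ℚ →+* Qv))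
    (by
      have hX : Transcendental ℚ (RatFunc.X : RatFunc ℚ) := by
        have h1 : Transcendental ℚ (Polynomial.X : Polynomial ℚ) :=
          Polynomial.transcendental_X ℚ
        have h2 := (transcendental_algebraMap_iff
          (R := ℚ) (S := Polynomial ℚ) (A := RatFunc ℚ)
          (IsFractionRing.injective (Polynomial ℚ) (RatFunc ℚ))).2 h1
        simpa [RatFunc.algebraMap_X] using h2
      have hinv : Transcendental ℚ (vQ⁻¹ : Qv) := by
        intro h
        exact hX (IsAlgebraic.inv_iff.mp (by simpa [vQ] using h))
      exact transcendental_iff_injective.mp hinv)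

/-- g ∈ v⁻¹ℤ[[v⁻¹]]: the Laurent expansion of g(v⁻¹) at 0 has integer
coefficients and only strictly positive powers. -/
def memSmall (g : Qv) : Prop :=
  (∀ k : ℤ, k ≤ 0 → ((subinv g : Qv) : LaurentSeries ℚ).coeff k = 0) ∧
    (∀ k : ℤ, ∃ m : ℤ, ((subinv g : Qv) : LaurentSeries ℚ).coeff k = (m : ℚ))

/-- g ∈ 1 + v⁻¹ℤ[[v⁻¹]]. -/
def memOne (g : Qv) : Prop := ∃ h : Qv, memSmall h ∧ g = 1 + h

def c0 : Qv →+ ℚ :=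
  AddMonoidHom.mk' (fun g => ((subinv g : Qv) : LaurentSeries ℚ).coeff 0)
    (fun a b => by simp [map_add, HahnSeries.coeff_add])

lemma c0_small {g : Qv} (h : memSmall g) : c0 g = 0 := h.1 0 le_rfl

lemma c0_one {g : Qv} (h : memOne g) : c0 g = 1 := by
  obtain ⟨h', hs, rfl⟩ := h
  have : c0 (1 : Qv) = 1 := by
    simp [c0, map_one, HahnSeries.coeff_one]
  rw [map_add, this, c0_small hs, add_zero]

def Ek (k : ℤ) : Qvt →+ Qv :=
  AddMonoidHom.mk' (fun f => ((f : Qvt) : LaurentSeries Qv).coeff k)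
    (fun a b => by simp [map_add, HahnSeries.coeff_add])

lemma Ek_term (k j : ℤ) (g : Qv) :
    Ek k (tQ ^ j * RatFunc.C g) = if k = j then g else 0 := by
  have h1 : ((tQ ^ j * RatFunc.C g : Qvt) : LaurentSeries Qv) = HahnSeries.single j g := by
    rw [map_mul, map_zpow₀]
    rw [show ((tQ : Qvt) : LaurentSeries Qv) = HahnSeries.single 1 1 from by
      exact RatFunc.coe_X]
    rw [show ((RatFunc.C g : Qvt) : LaurentSeries Qv) = HahnSeries.C g from by
      rw [← RatFunc.algebraMap_C, ← IsScalarTower.algebraMap_apply]; simp]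
    rw [← RatFunc.single_zpow, HahnSeries.C_apply, HahnSeries.single_mul_single]
    simp
  show ((tQ ^ j * RatFunc.C g : Qvt) : LaurentSeries Qv).coeff k = _
  rw [h1, HahnSeries.coeff_single]
  congr

lemma aux_nonpos {β : Type*} [DecidableEq β]
    (s : Finset β) (n : β → ℤ) (P : β → β → Qv)
    (hPdiag : ∀ b, memOne (P b b))
    (hPoff : ∀ b b', b ≠ b' → memSmall (P b b'))
    (hzero : ∀ k : ℤ, k ≠ 0 →
      (∑ b ∈ s, ∑ b' ∈ s, if n b + n b' = k then P b b' else 0) = 0) :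
    ∀ b ∈ s, n b ≤ 0 := by
  intro b hb
  by_contra hpos
  push_neg at hpos
  have hne : (s.image n).Nonempty := ⟨n b, Finset.mem_image_of_mem n hb⟩
  set M := (s.image n).max' hne with hMdef
  have hle : ∀ c ∈ s, n c ≤ M := fun c hc =>
    Finset.le_max' _ _ (Finset.mem_image_of_mem n hc)
  have hM : 0 < M := lt_of_lt_of_le hpos (hle b hb)
  have h2M := hzero (2 * M) (by omega)
  have key : (∑ c ∈ s, ∑ c' ∈ s, if n c = M ∧ n c' = M then P c c' else 0) = 0 := by
    refine Eq.trans (Finset.sum_congr rfl fun c hc =>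
      Finset.sum_congr rfl fun c' hc' => ?_) h2M
    have h1 := hle c hc
    have h2 := hle c' hc'
    by_cases h : n c = M ∧ n c' = M
    · rw [if_pos h, if_pos (by omega)]
    · rw [if_neg h, if_neg (by omega)]
  have key2 : (∑ c ∈ s, ∑ c' ∈ s, if n c = M ∧ n c' = M then c0 (P c c') else 0)
      = 0 := by
    have := congrArg c0 key
    simpa [map_sum, apply_ite c0] using this
  have key3 : (∑ c ∈ s, (if n c = M then (1 : ℚ) else 0)) = 0 := by
    refine Eq.trans (Finset.sum_congr rfl fun c hc => ?_).symm key2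
    rw [Finset.sum_eq_single_of_mem c hc]
    · by_cases h : n c = M
      · simp [h, c0_one (hPdiag c)]
      · simp [h]
    · intro c' hc' hne'
      by_cases h : n c = M ∧ n c' = M
      · rw [if_pos h, c0_small (hPoff c c' (Ne.symm hne'))]
      · rw [if_neg h]
  obtain ⟨c, hc, hcM⟩ := Finset.mem_image.mp ((s.image n).max'_mem hne)
  have := (Finset.sum_eq_zero_iff_of_nonneg (fun c _ => by positivity)).mp key3 c hc
  rw [if_pos hcM] at this
  exact one_ne_zero this

theorem canonical_signed_basis_t_free {β : Type*} [DecidableEq β]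
    (s : Finset β) (n : β → ℤ) (P : β → β → Qv)
    (hPsym : ∀ b b', P b b' = P b' b)
    (hPdiag : ∀ b, memOne (P b b))
    (hPoff : ∀ b b', b ≠ b' → memSmall (P b b'))
    (hxx : ∃ g : Qv, memOne g ∧
      (∑ b ∈ s, ∑ b' ∈ s, tQ ^ (n b + n b') * RatFunc.C (P b b'))
        = RatFunc.C g) :
    ∀ b ∈ s, n b = 0 := by
  obtain ⟨g, _, hsum⟩ := hxx
  have hzero : ∀ k : ℤ, k ≠ 0 →
      (∑ b ∈ s, ∑ b' ∈ s, if n b + n b' = k then P b b' else 0) = 0 := by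
    intro k hk
    have := congrArg (Ek k) hsum
    rw [map_sum] at this
    simp only [map_sum, Ek_term] at this
    have hrhs : Ek k (RatFunc.C g) = 0 := by
      have : Ek k (tQ ^ (0 : ℤ) * RatFunc.C g) = if k = 0 then g else 0 := Ek_term k 0 g
      rw [zpow_zero, one_mul] at this
      rw [this, if_neg hk]
    rw [hrhs] at this
    refine Eq.trans (Finset.sum_congr rfl fun c _ =>
      Finset.sum_congr rfl fun c' _ => ?_) this
    by_cases h : n c + n c' = k
    · rw [if_pos h, if_pos h.symm]
    · rw [if_neg h, if_neg (fun h' => h h'.symm)]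
  intro b hb
  have h1 := aux_nonpos s n P hPdiag hPoff hzero b hb
  have h2 := aux_nonpos s (fun c => -n c) P hPdiag hPoff (fun k hk => by
    refine Eq.trans (Finset.sum_congr rfl fun c _ =>
      Finset.sum_congr rfl fun c' _ => ?_) (hzero (-k) (by omega))
    have h3 : (-n c + -n c' = k) ↔ (n c + n c' = -k) := by omega
    by_cases h : n c + n c' = -k
    · rw [if_pos h, if_pos (h3.mpr h)]
    · rw [if_neg h, if_neg (fun h' => h (h3.mp h'))]) b hb
  simp at h2
  omega

end
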